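/- Two arrays A, B : Fin m → Option U that both satisfy the Robin Hood ordering invariant and store the same multiset of elements are equal (unique representability of Robin Hood hashing). -/

import Mathlib

/-- The rank of `v` at cell `i`: the cyclic distance `(i - h v) mod m`. -/
def rnk {U : Type*} {m : ℕ} (h : U → Fin m) (v : U) (i : Fin m) : ℕ :=
  ((i : ℕ) + m - (h v : ℕ)) % m

/-- Cyclic distance from `a` to `b`, going forward, modulo `m`. -/
def cdist {m : ℕ} (a b : Fin m) : ℕ :=
  ((b : ℕ) + m - (a : ℕ)) % m

/-- Robin Hood priority: `a >_i b` iff `rank(a,i) > rank(b,i)`, or equal ranks and `a > b`. -/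
def prioGT {U : Type*} [LinearOrder U] {m : ℕ} (h : U → Fin m) (i : Fin m) (a b : U) : Prop :=
  rnk h a i > rnk h b i ∨ (rnk h a i = rnk h b i ∧ a > b)

/-- Priority extended to `Option U`: `none` is strictly below every `some v`. -/
def oGT {U : Type*} [LinearOrder U] {m : ℕ} (h : U → Fin m) (i : Fin m) :
    Option U → Option U → Prop
  | some a, some b => prioGT h i a b
  | some _, none => True
  | none, _ => False

/-- `x ≥_i y` : strictly higher priority, or equal. -/
def oGE {U : Type*} [LinearOrder U] {m : ℕ} (h : U → Fin m) (i : Fin m)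
    (x y : Option U) : Prop :=
  oGT h i x y ∨ x = y

/-- The Robin Hood ordering invariant: if `v` is stored at cell `i`, then every cell `j`
on the cyclic interval from `h v` to `i` (exclusive of `i`) stores a value of priority
at least that of `v` at cell `j`. -/
def OrdInv {U : Type*} [LinearOrder U] {m : ℕ} (h : U → Fin m) (A : Fin m → Option U) : Prop :=
  ∀ i v, A i = some v → ∀ j, cdist (h v) j < cdist (h v) i → oGE h j (A j) (some v)

/-- The multiset of elements stored in the table `A` (counted with multiplicity). -/
def elemsOf {U : Type*} {m : ℕ} (A : Fin m → Option U) : Multiset U :=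
  ((List.ofFn A).filterMap id : List U)

set_option linter.unusedSectionVars false

open scoped Classical

section RH

variable {U : Type*} [LinearOrder U] {m : ℕ}

/-! ### Arithmetic of `cdist` -/

lemma cdist_eq (hm : 0 < m) (a b : Fin m) :
    cdist a b = if (a:ℕ) ≤ (b:ℕ) then (b:ℕ) - a else (b:ℕ) + m - a := by
  have ha := a.isLt; have hb := b.isLt
  unfold cdist
  split_ifs with hab
  · have h1 : (b:ℕ) + m - a = ((b:ℕ) - a) + m := by omega
    rw [h1, Nat.add_mod_right, Nat.mod_eq_of_lt (by omega)]
  · rw [Nat.mod_eq_of_lt (by omega)]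

lemma cdist_lt (hm : 0 < m) (a b : Fin m) : cdist a b < m := by
  have ha := a.isLt; have hb := b.isLt
  rw [cdist_eq hm]; split_ifs <;> omega

lemma cdist_zero_iff (hm : 0 < m) {a b : Fin m} : cdist a b = 0 ↔ a = b := by
  have ha := a.isLt; have hb := b.isLt
  rw [cdist_eq hm]
  constructor
  · intro h'; apply Fin.ext; split_ifs at h' <;> omega
  · rintro rfl; simp

lemma cdist_inj (hm : 0 < m) {a b c : Fin m} (h : cdist a b = cdist a c) : b = c := by
  have ha := a.isLt; have hb := b.isLt; have hc := c.isLt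
  apply Fin.ext
  rw [cdist_eq hm, cdist_eq hm] at h
  split_ifs at h <;> omega

lemma cdist_cell (hm : 0 < m) (a : Fin m) {t : ℕ} (ht : t < m) :
    cdist a ⟨((a:ℕ) + t) % m, Nat.mod_lt _ hm⟩ = t := by
  have ha := a.isLt
  show ((((a:ℕ) + t) % m) + m - (a:ℕ)) % m = t
  rcases lt_or_ge ((a:ℕ) + t) m with hc | hc
  · rw [Nat.mod_eq_of_lt hc]
    have h1 : (a:ℕ) + t + m - a = t + m := by omega
    simp only [h1, Nat.add_mod_right]
    exact Nat.mod_eq_of_lt ht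
  · have h0 : ((a:ℕ) + t) % m = (a:ℕ) + t - m := by
      rw [Nat.mod_eq_sub_mod hc, Nat.mod_eq_of_lt (by omega)]
    simp only [h0]
    have h1 : (a:ℕ) + t - m + m - a = t := by omega
    rw [h1, Nat.mod_eq_of_lt ht]

lemma arith1 (hm : 0 < m) {eB k e : Fin m} (h1 : 1 ≤ cdist eB k)
    (h2 : cdist eB k ≤ cdist eB e) (h3 : k ≠ e) : cdist k e < cdist eB e := by
  have hk := k.isLt; have he := e.isLt; have heB := eB.isLt
  have h3' : (k:ℕ) ≠ (e:ℕ) := fun hh => h3 (Fin.ext hh)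
  simp only [cdist_eq hm] at h1 h2 ⊢
  split_ifs at * <;> omega

lemma arith2 (hm : 0 < m) {a k eB : Fin m} (h : cdist a k < cdist a eB) :
    1 ≤ cdist eB a ∧ cdist eB a + cdist a k = cdist eB k := by
  have hk := k.isLt; have ha := a.isLt; have heB := eB.isLt
  simp only [cdist_eq hm] at h ⊢
  split_ifs at * <;> omega

lemma arith3 (hm : 0 < m) {eB e a p : Fin m} (h1 : 1 ≤ cdist eB a)
    (h2 : cdist eB a ≤ cdist eB e) (h3 : cdist a p < cdist a e) :
    1 ≤ cdist eB p ∧ cdist eB p < cdist eB e := by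
  have ha := a.isLt; have he := e.isLt; have heB := eB.isLt; have hp := p.isLt
  simp only [cdist_eq hm] at h1 h2 h3 ⊢
  split_ifs at * <;> omega

lemma arith4 (hm : 0 < m) {hb e i p : Fin m} (h1 : cdist hb i < cdist hb e)
    (h2 : cdist hb p < cdist hb e) (h3 : cdist e i ≤ cdist e p) (h4 : i ≠ p) :
    cdist hb i < cdist hb p := by
  have ha := hb.isLt; have he := e.isLt; have hi := i.isLt; have hp := p.isLt
  have h4' : (i:ℕ) ≠ (p:ℕ) := fun hh => h4 (Fin.ext hh)
  simp only [cdist_eq hm] at h1 h2 h3 ⊢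
  split_ifs at * <;> omega

/-! ### Counting -/

lemma elems_eq (A : Fin m → Option U) :
    elemsOf A = Multiset.filterMap id (Multiset.map A Finset.univ.val) := by
  rw [Fin.univ_val_map]
  rfl

lemma count_aux (A : Fin m → Option U) (P : U → Prop) [DecidablePred P]
    [DecidablePred fun i => ∃ v, A i = some v ∧ P v]
    (s : Multiset (Fin m)) :
    Multiset.card (Multiset.filter P (Multiset.filterMap id (Multiset.map A s))) =
      Multiset.card (Multiset.filter (fun i => ∃ v, A i = some v ∧ P v) s) := by
  induction s using Multiset.induction with
  | empty => simp
  | cons i s ih =>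
    rw [Multiset.map_cons]
    cases hAi : A i with
    | none =>
      rw [Multiset.filterMap_cons_none _ _ rfl, ih, Multiset.filter_cons,
        if_neg (by rintro ⟨v, hv, -⟩; rw [hAi] at hv; cases hv)]
      simp
    | some v =>
      rw [Multiset.filterMap_cons_some id (some v) (Multiset.map A s) (b := v) rfl,
        Multiset.filter_cons, Multiset.filter_cons]
      by_cases hP : P v
      · rw [if_pos hP, if_pos ⟨v, hAi, hP⟩]
        simp [ih]
      · rw [if_neg hP, if_neg (fun hx => by
          obtain ⟨w, hw, hPw⟩ := hx
          rw [hAi] at hw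
          cases hw
          exact hP hPw)]
        simp [ih]

lemma count_filter (A : Fin m → Option U) (P : U → Prop) [DecidablePred P]
    [DecidablePred fun i => ∃ v, A i = some v ∧ P v] :
    Multiset.card ((elemsOf A).filter P) =
      (Finset.univ.filter (fun i => ∃ v, A i = some v ∧ P v)).card := by
  rw [elems_eq, count_aux, Finset.card, Finset.filter_val]

lemma card_aux (A : Fin m → Option U) [DecidablePred fun i : Fin m => A i ≠ none]
    (s : Multiset (Fin m)) :
    Multiset.card (Multiset.filterMap id (Multiset.map A s)) =
      Multiset.card (Multiset.filter (fun i => A i ≠ none) s) := by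
  induction s using Multiset.induction with
  | empty => simp
  | cons i s ih =>
    rw [Multiset.map_cons]
    cases hAi : A i with
    | none =>
      rw [Multiset.filterMap_cons_none _ _ rfl, ih, Multiset.filter_cons,
        if_neg (by simp [hAi])]
      simp
    | some v =>
      rw [Multiset.filterMap_cons_some id (some v) (Multiset.map A s) (b := v) rfl,
        Multiset.filter_cons, if_pos (by simp [hAi])]
      simp [ih]

lemma card_elems (A : Fin m → Option U) [DecidablePred fun i : Fin m => A i ≠ none] :
    Multiset.card (elemsOf A) = (Finset.univ.filter (fun i => A i ≠ none)).card := by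
  rw [elems_eq, card_aux, Finset.card, Finset.filter_val]

lemma count_val (A : Fin m → Option U) (b : U) :
    Multiset.card ((elemsOf A).filter (fun v => v = b)) =
      (Finset.univ.filter (fun i => A i = some b)).card := by
  rw [count_filter]
  congr 1
  apply Finset.filter_congr
  intro i _
  constructor
  · rintro ⟨v, hv, rfl⟩; exact hv
  · intro hv; exact ⟨b, hv, rfl⟩

lemma exists_none (A : Fin m → Option U) [DecidablePred fun i : Fin m => A i ≠ none]
    (hcard : Multiset.card (elemsOf A) < m) : ∃ e, A e = none := by
  by_contra hc
  push_neg at hc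
  rw [card_elems, Finset.filter_true_of_mem (fun i _ => hc i)] at hcard
  simp at hcard

/-! ### Invariant consequences -/

lemma occ {h : U → Fin m} {A : Fin m → Option U}
    (hA : OrdInv h A) {i j : Fin m} {v : U} (hi : A i = some v)
    (hj : cdist (h v) j < cdist (h v) i) :
    ∃ w, A j = some w ∧ (prioGT h j w v ∨ w = v) := by
  have hx := hA i v hi j hj
  cases hAj : A j with
  | none =>
    rw [hAj] at hx
    rcases hx with hx | hx
    · exact (hx : False).elim
    · cases hx
  | some w =>
    rw [hAj] at hx
    rcases hx with hx | hx
    · exact ⟨w, rfl, Or.inl hx⟩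
    · exact ⟨w, rfl, Or.inr (by injection hx)⟩

lemma not_pass (hm : 0 < m) {h : U → Fin m} {A : Fin m → Option U}
    (hA : OrdInv h A) {p e : Fin m} {v : U} (hp : A p = some v) (he : A e = none) :
    cdist (h v) p < cdist (h v) e := by
  have hne : p ≠ e := fun hh => by rw [hh, he] at hp; cases hp
  rcases Nat.lt_trichotomy (cdist (h v) p) (cdist (h v) e) with hx | hx | hx
  · exact hx
  · exact absurd (cdist_inj hm hx) hne
  · obtain ⟨w, hw, -⟩ := occ hA hp hx
    rw [he] at hw; cases hw

lemma prioGT_asymm {h : U → Fin m} {i : Fin m} {a b : U}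
    (h1 : prioGT h i a b) (h2 : prioGT h i b a) : False := by
  rcases h1 with h1 | ⟨h1, h1'⟩ <;> rcases h2 with h2 | ⟨h2, h2'⟩
  · omega
  · omega
  · omega
  · exact lt_asymm h1' h2'

/-! ### Occupancy agreement -/

lemma none_of_none (h : U → Fin m) (A B : Fin m → Option U)
    (hA : OrdInv h A) (hB : OrdInv h B) (hsame : elemsOf A = elemsOf B)
    (hcard : Multiset.card (elemsOf A) < m) {e : Fin m} (he : A e = none) :
    B e = none := by
  have hm : 0 < m := Nat.lt_of_le_of_lt (Nat.zero_le _) hcard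
  by_contra hBe
  obtain ⟨b, hb⟩ := Option.ne_none_iff_exists'.mp hBe
  have hcardB : Multiset.card (elemsOf B) < m := by rw [← hsame]; exact hcard
  obtain ⟨e0, he0⟩ := exists_none B hcardB
  have hEB : (Finset.univ.filter (fun x => B x = none)).Nonempty :=
    ⟨e0, Finset.mem_filter.mpr ⟨Finset.mem_univ _, he0⟩⟩
  obtain ⟨eB, heBm, hmin⟩ := Finset.exists_min_image _ (fun x => cdist x e) hEB
  have heB : B eB = none := (Finset.mem_filter.mp heBm).2
  set d := cdist eB e with hd
  have hene : e ≠ eB := fun hh => by rw [hh, heB] at hb; cases hb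
  have hd1 : 1 ≤ d := by
    rcases Nat.eq_zero_or_pos d with h0 | h0
    · exact absurd ((cdist_zero_iff hm).mp h0).symm hene
    · exact h0
  have hocc : ∀ k : Fin m, 1 ≤ cdist eB k → cdist eB k ≤ d → B k ≠ none := by
    intro k hk1 hk2 hknone
    have hke : k ≠ e := fun hh => by rw [hh, hb] at hknone; cases hknone
    have hx := hmin k (Finset.mem_filter.mpr ⟨Finset.mem_univ _, hknone⟩)
    exact absurd hx (not_le.mpr (arith1 hm hk1 hk2 hke))
  have hcards : (Finset.univ.filter (fun p => ∃ v, A p = some v ∧ 1 ≤ cdist eB (h v) ∧ cdist eB (h v) ≤ d)).card =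
      (Finset.univ.filter (fun p => ∃ v, B p = some v ∧ 1 ≤ cdist eB (h v) ∧ cdist eB (h v) ≤ d)).card := by
    rw [← count_filter, ← count_filter, hsame]
  have hlow : (Finset.Icc 1 d).card ≤
      (Finset.univ.filter (fun p => ∃ v, B p = some v ∧ 1 ≤ cdist eB (h v) ∧ cdist eB (h v) ≤ d)).card := by
    apply Finset.card_le_card_of_injOn
      (fun t => (⟨((eB:ℕ) + t) % m, Nat.mod_lt _ hm⟩ : Fin m))
    · intro t ht
      simp only [Finset.mem_coe, Finset.mem_Icc] at ht
      have htm : t < m := lt_of_le_of_lt ht.2 (cdist_lt hm eB e)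
      have hct : cdist eB ⟨((eB:ℕ) + t) % m, Nat.mod_lt _ hm⟩ = t := cdist_cell hm eB htm
      have hocck := hocc _ (by rw [hct]; exact ht.1) (by rw [hct]; exact ht.2)
      obtain ⟨w, hw⟩ := Option.ne_none_iff_exists'.mp hocck
      have hwp := not_pass hm hB hw heB
      obtain ⟨hw1, hw2⟩ := arith2 hm hwp
      refine Finset.mem_filter.mpr ⟨Finset.mem_univ _, w, hw, hw1, ?_⟩
      rw [hct] at hw2
      omega
    · intro t1 ht1 t2 ht2 heq
      rw [Finset.coe_Icc, Set.mem_Icc] at ht1 ht2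
      have hc1 : cdist eB ⟨((eB:ℕ) + t1) % m, Nat.mod_lt _ hm⟩ = t1 :=
        cdist_cell hm eB (lt_of_le_of_lt ht1.2 (cdist_lt hm eB e))
      have hc2 : cdist eB ⟨((eB:ℕ) + t2) % m, Nat.mod_lt _ hm⟩ = t2 :=
        cdist_cell hm eB (lt_of_le_of_lt ht2.2 (cdist_lt hm eB e))
      have := congrArg (cdist eB) heq
      rw [hc1, hc2] at this
      exact this
  have hup : (Finset.univ.filter (fun p => ∃ v, A p = some v ∧ 1 ≤ cdist eB (h v) ∧ cdist eB (h v) ≤ d)).card ≤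
      (Finset.Icc 1 (d - 1)).card := by
    apply Finset.card_le_card_of_injOn (fun p => cdist eB p)
    · intro p hp
      obtain ⟨-, v, hv, hv1, hv2⟩ := Finset.mem_filter.mp hp
      have hvp := not_pass hm hA hv he
      obtain ⟨hx1, hx2⟩ := arith3 hm hv1 hv2 hvp
      simp only [Finset.mem_coe, Finset.mem_Icc]
      omega
    · intro p1 _ p2 _ heq
      exact cdist_inj hm heq
  rw [Nat.card_Icc] at hlow hup
  omega

/-! ### The exchange argument -/

lemma beats (h : U → Fin m) (X Y : Fin m → Option U)
    (hX : OrdInv h X) (hY : OrdInv h Y) {e i : Fin m} {a b : U}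
    (hXe : X e = none) (hYe : Y e = none)
    (hXi : X i = some b) (hYi : Y i = some a) (hab : a ≠ b)
    (hagree : ∀ j, cdist e j < cdist e i → X j = Y j)
    (hm : 0 < m)
    (hcount : (Finset.univ.filter (fun q => X q = some b)).card =
              (Finset.univ.filter (fun q => Y q = some b)).card) :
    prioGT h i a b := by
  have hpex : ∃ p, Y p = some b ∧ cdist e i ≤ cdist e p := by
    by_contra hc
    push_neg at hc
    set R := Finset.univ.filter (fun q => X q = some b ∧ cdist e q < cdist e i) with hR
    have hSY : (Finset.univ.filter (fun q => Y q = some b)) ⊆ R := by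
      intro q hq
      have hq' : Y q = some b := (Finset.mem_filter.mp hq).2
      have hlt : cdist e q < cdist e i := hc q hq'
      exact Finset.mem_filter.mpr ⟨Finset.mem_univ _, by rw [hagree q hlt]; exact hq', hlt⟩
    have hiR : i ∉ R := by
      intro hi
      exact absurd (Finset.mem_filter.mp hi).2.2 (lt_irrefl _)
    have hins : insert i R ⊆ (Finset.univ.filter (fun q => X q = some b)) := by
      intro q hq
      rcases Finset.mem_insert.mp hq with rfl | hq'
      · exact Finset.mem_filter.mpr ⟨Finset.mem_univ _, hXi⟩
      · exact Finset.mem_filter.mpr ⟨Finset.mem_univ _, (Finset.mem_filter.mp hq').2.1⟩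
    have h1 := Finset.card_le_card hins
    have h2 := Finset.card_le_card hSY
    rw [Finset.card_insert_of_notMem hiR] at h1
    omega
  obtain ⟨p, hp, hpe⟩ := hpex
  have hpi : p ≠ i := by
    rintro rfl
    rw [hYi] at hp
    exact hab (Option.some.inj hp)
  have hbi : cdist (h b) i < cdist (h b) e := not_pass hm hX hXi hXe
  have hbp : cdist (h b) p < cdist (h b) e := not_pass hm hY hp hYe
  have hkey : cdist (h b) i < cdist (h b) p := arith4 hm hbi hbp hpe (Ne.symm hpi)
  obtain ⟨w, hw, hwp⟩ := occ hY hp hkey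
  rw [hYi] at hw
  injection hw with hw
  subst hw
  rcases hwp with hwp | hwp
  · exact hwp
  · exact absurd hwp hab

end RH

theorem stmt5 {U : Type*} [LinearOrder U] {m : ℕ} (h : U → Fin m)
    (A B : Fin m → Option U) (hA : OrdInv h A) (hB : OrdInv h B)
    (hsame : elemsOf A = elemsOf B)
    (hcard : Multiset.card (elemsOf A) < m) :
    A = B := by
  have hm : 0 < m := Nat.lt_of_le_of_lt (Nat.zero_le _) hcard
  have hcardB : Multiset.card (elemsOf B) < m := by rw [← hsame]; exact hcard
  have hiff : ∀ i, A i = none ↔ B i = none := fun i =>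
    ⟨fun hh => none_of_none h A B hA hB hsame hcard hh,
     fun hh => none_of_none h B A hB hA hsame.symm hcardB hh⟩
  by_contra hne
  have hD : (Finset.univ.filter (fun j => A j ≠ B j)).Nonempty := by
    have hex : ∃ j, A j ≠ B j := by
      by_contra hcc
      push_neg at hcc
      exact hne (funext hcc)
    obtain ⟨j, hj⟩ := hex
    exact ⟨j, Finset.mem_filter.mpr ⟨Finset.mem_univ _, hj⟩⟩
  obtain ⟨e, he⟩ := exists_none A hcard
  have heB : B e = none := (hiff e).mp he
  obtain ⟨i, him, hmin⟩ := Finset.exists_min_image _ (fun j => cdist e j) hD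
  have hABi : A i ≠ B i := (Finset.mem_filter.mp him).2
  have hAi : A i ≠ none := fun hh => hABi (by rw [hh, (hiff i).mp hh])
  have hBi : B i ≠ none := fun hh => hABi (by rw [(hiff i).mpr hh, hh])
  obtain ⟨a, ha⟩ := Option.ne_none_iff_exists'.mp hAi
  obtain ⟨b, hbv⟩ := Option.ne_none_iff_exists'.mp hBi
  have hab : a ≠ b := fun hh => hABi (by rw [ha, hbv, hh])
  have hagree : ∀ j, cdist e j < cdist e i → A j = B j := by
    intro j hj
    by_contra hj'
    have hx := hmin j (Finset.mem_filter.mpr ⟨Finset.mem_univ _, hj'⟩)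
    omega
  have hcount1 : ∀ c : U,
      (Finset.univ.filter (fun q => A q = some c)).card =
        (Finset.univ.filter (fun q => B q = some c)).card := by
    intro c
    rw [← count_val, ← count_val, hsame]
  have h1 : prioGT h i a b :=
    beats h B A hB hA heB he hbv ha hab (fun j hj => (hagree j hj).symm) hm (hcount1 b).symm
  have h2 : prioGT h i b a :=
    beats h A B hA hB he heB ha hbv (Ne.symm hab) hagree hm (hcount1 a)
  exact prioGT_asymm h1 h2
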